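/- Let D_∞ be the infinite dihedral group with elements r^i and s r^i for i ∈ ℤ. Let B be a finite nonempty subset of ℤ, and let A = {r^b : b ∈ B} ∪ {s r^b : b ∈ B} ⊆ D_∞. Then |AA^{-1}| - |A^{-1}A| = |B - B| - |B + B|, where B + B = {b + b' : b, b' ∈ B} and B - B = {b - b' : b, b' ∈ B}. -/

import Mathlib

open scoped Pointwise

open Finset DihedralGroup

/-- For a finite nonempty `B ⊆ ℤ` and `A = {r^b : b ∈ B} ∪ {s r^b : b ∈ B} ⊆ D_∞`, we have
`|A * A⁻¹| - |A⁻¹ * A| = |B - B| - |B + B|`. -/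
theorem stmt_2 (B : Finset ℤ) (hB : B.Nonempty)
    (A : Finset (DihedralGroup 0))
    (hA : A = B.image (fun b => DihedralGroup.r (b : ZMod 0)) ∪
            B.image (fun b => DihedralGroup.sr (b : ZMod 0))) :
    ((A * A⁻¹).card : ℤ) - ((A⁻¹ * A).card : ℤ)
      = ((B - B).card : ℤ) - ((B + B).card : ℤ) := by
  classical
  set f : ℤ → DihedralGroup 0 := fun b => DihedralGroup.r (b : ZMod 0) with hf
  set g : ℤ → DihedralGroup 0 := fun b => DihedralGroup.sr (b : ZMod 0) with hg
  replace hA : A = B.image f ∪ B.image g := hA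
  have hinj_f : Function.Injective f := by
    intro a b h
    have h' : (a : ZMod 0) = (b : ZMod 0) := by injection h
    exact h'
  have hinj_g : Function.Injective g := by
    intro a b h
    have h' : (a : ZMod 0) = (b : ZMod 0) := by injection h
    exact h'
  have hAinv : A⁻¹ = B.image (fun b : ℤ => DihedralGroup.r (-(b : ZMod 0))) ∪ B.image g := by
    rw [Finset.inv_def, hA, image_union, image_image, image_image]
    rfl
  have hmul : ∀ (s t : Finset ℤ) (p q : ℤ → DihedralGroup 0),
      (s.image p) * (t.image q) = Finset.image₂ (fun a b => p a * q b) s t := by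
    intro s t p q
    rw [show (s.image p) * (t.image q) = image₂ (· * ·) (s.image p) (t.image q) from rfl,
      image₂_image_left, image₂_image_right]
  have hsub : B - B = Finset.image₂ (fun a b : ℤ => a - b) B B := rfl
  have hadd : B + B = Finset.image₂ (fun a b : ℤ => a + b) B B := rfl
  have e1 : A * A⁻¹ = (B - B).image f ∪ (B - B).image g := by
    rw [hAinv, hA, Finset.union_mul, Finset.mul_union, Finset.mul_union,
      hmul, hmul, hmul, hmul, hsub, image_image₂, image_image₂]
    have c1 : Finset.image₂ (fun a b : ℤ => f a * DihedralGroup.r (-(b : ZMod 0))) B B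
        = Finset.image₂ (fun a b : ℤ => f (a - b)) B B := by
      apply Finset.image₂_congr
      intro a ha b hb
      show DihedralGroup.r _ * DihedralGroup.r _ = DihedralGroup.r _
      erw [r_mul_r]
      try push_cast
      try ring_nf
      exact congrArg r (by omega : (a:ℤ) + -b = -b + a)
    have c2 : Finset.image₂ (fun a b : ℤ => f a * g b) B B
        = Finset.image₂ (fun a b : ℤ => g (a - b)) B B := by
      rw [Finset.image₂_swap _ B B]
      apply Finset.image₂_congr
      intro a ha b hb
      show DihedralGroup.r _ * DihedralGroup.sr _ = DihedralGroup.sr _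
      erw [r_mul_sr]
      try push_cast
      try ring_nf
      exact rfl
    have c3 : Finset.image₂ (fun a b : ℤ => g a * DihedralGroup.r (-(b : ZMod 0))) B B
        = Finset.image₂ (fun a b : ℤ => g (a - b)) B B := by
      apply Finset.image₂_congr
      intro a ha b hb
      show DihedralGroup.sr _ * DihedralGroup.r _ = DihedralGroup.sr _
      erw [sr_mul_r]
      try push_cast
      try ring_nf
      exact congrArg sr (by omega : (a:ℤ) + -b = -b + a)
    have c4 : Finset.image₂ (fun a b : ℤ => g a * g b) B B
        = Finset.image₂ (fun a b : ℤ => f (a - b)) B B := by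
      rw [Finset.image₂_swap _ B B]
      apply Finset.image₂_congr
      intro a ha b hb
      show DihedralGroup.sr _ * DihedralGroup.sr _ = DihedralGroup.r _
      erw [sr_mul_sr]
      try push_cast
      try ring_nf
      exact rfl
    rw [c1, c2, c3, c4]
    ext x
    simp only [mem_union]
    tauto
  have e2 : A⁻¹ * A = (B - B).image f ∪ (B + B).image g := by
    rw [hAinv, hA, Finset.union_mul, Finset.mul_union, Finset.mul_union,
      hmul, hmul, hmul, hmul, hsub, hadd, image_image₂, image_image₂]
    have c1 : Finset.image₂ (fun a b : ℤ => DihedralGroup.r (-(a : ZMod 0)) * f b) B B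
        = Finset.image₂ (fun a b : ℤ => f (a - b)) B B := by
      rw [Finset.image₂_swap _ B B]
      apply Finset.image₂_congr
      intro a ha b hb
      show DihedralGroup.r _ * DihedralGroup.r _ = DihedralGroup.r _
      erw [r_mul_r]
      try push_cast
      try ring_nf
      exact rfl
    have c2 : Finset.image₂ (fun a b : ℤ => DihedralGroup.r (-(a : ZMod 0)) * g b) B B
        = Finset.image₂ (fun a b : ℤ => g (a + b)) B B := by
      apply Finset.image₂_congr
      intro a ha b hb
      show DihedralGroup.r _ * DihedralGroup.sr _ = DihedralGroup.sr _
      erw [r_mul_sr]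
      try push_cast
      try ring_nf
      exact congrArg sr (by omega : (b:ℤ) - -a = a + b)
    have c3 : Finset.image₂ (fun a b : ℤ => g a * f b) B B
        = Finset.image₂ (fun a b : ℤ => g (a + b)) B B := by
      apply Finset.image₂_congr
      intro a ha b hb
      show DihedralGroup.sr _ * DihedralGroup.r _ = DihedralGroup.sr _
      erw [sr_mul_r]
      try push_cast
      try ring_nf
      exact rfl
    have c4 : Finset.image₂ (fun a b : ℤ => g a * g b) B B
        = Finset.image₂ (fun a b : ℤ => f (a - b)) B B := by
      rw [Finset.image₂_swap _ B B]
      apply Finset.image₂_congr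
      intro a ha b hb
      show DihedralGroup.sr _ * DihedralGroup.sr _ = DihedralGroup.r _
      erw [sr_mul_sr]
      try push_cast
      try ring_nf
      exact rfl
    rw [c1, c2, c3, c4]
    ext x
    simp only [mem_union]
    tauto
  have hdisj : ∀ (s t : Finset ℤ), Disjoint (s.image f) (t.image g) := by
    intro s t
    rw [Finset.disjoint_left]
    rintro x hx hx'
    simp only [mem_image, hf, hg] at hx hx'
    obtain ⟨a, _, rfl⟩ := hx
    obtain ⟨b, _, hb⟩ := hx'
    exact absurd hb (by simp)
  rw [e1, e2, card_union_of_disjoint (hdisj _ _), card_union_of_disjoint (hdisj _ _)]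
  simp only [Finset.card_image_of_injective _ hinj_f, Finset.card_image_of_injective _ hinj_g]
  push_cast
  ring
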